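/- Let m, k be positive integers with 2k ≤ m and 50 dividing m, and let X_1, …, X_{m/50} be i.i.d. Bernoulli random variables each equal to 1 with probability 2k/m and 0 otherwise. Then P[ ∑_{i=1}^{m/50} X_i ≥ k ] ≤ ( e^{24} / 25^{25} )^{k/25} ≤ 0.11. -/

import Mathlib

open MeasureTheory ProbabilityTheory Real
open scoped ENNReal

/-- If `2k ≤ m`, `50 ∣ m`, and `X_1, …, X_{m/50}` are i.i.d.
Bernoulli random variables with success probability `2k/m`, then
`P[∑ X_i ≥ k] ≤ (e^{24}/25^{25})^{k/25} ≤ 0.11`. -/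
theorem stmt_16 {Ω : Type*} [MeasureSpace Ω] [IsProbabilityMeasure (ℙ : Measure Ω)]
    (m k : ℕ) (hm : 0 < m) (hk : 0 < k) (hkm : 2 * k ≤ m) (h50 : 50 ∣ m)
    (X : Fin (m / 50) → Ω → ℝ) (hXmeas : ∀ i, Measurable (X i))
    (hindep : iIndepFun X ℙ)
    (hone : ∀ i, ℙ {ω | X i ω = 1} = ENNReal.ofReal (2 * k / m))
    (hzero : ∀ i, ℙ {ω | X i ω = 0} = 1 - ENNReal.ofReal (2 * k / m)) :
    ℙ {ω | (k : ℝ) ≤ ∑ i, X i ω} ≤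
        ENNReal.ofReal ((Real.exp 24 / 25 ^ 25) ^ ((k : ℝ) / 25)) ∧
      (Real.exp 24 / 25 ^ 25 : ℝ) ^ ((k : ℝ) / 25) ≤ 0.11 := by
  have hmR : (0:ℝ) < m := by exact_mod_cast hm
  set p : ℝ := 2 * k / m with hp_def
  have hp0 : 0 ≤ p := by positivity
  have hp1 : p ≤ 1 := by
    rw [div_le_one hmR]; exact_mod_cast hkm
  set t : ℝ := Real.log 25 with ht_def
  have ht0 : 0 ≤ t := Real.log_nonneg (by norm_num)
  have het : Real.exp t = 25 := Real.exp_log (by norm_num)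
  -- per-variable integrability and mgf
  have hmgf : ∀ i, Integrable (fun ω => Real.exp (t * X i ω)) ℙ ∧
      mgf (X i) ℙ t = p * Real.exp t + (1 - p) := by
    intro i
    have hA : MeasurableSet {ω | X i ω = 1} := (hXmeas i) (measurableSet_singleton 1)
    have hB : MeasurableSet {ω | X i ω = 0} := (hXmeas i) (measurableSet_singleton 0)
    have hdisj : Disjoint {ω | X i ω = 1} {ω | X i ω = 0} := by
      rw [Set.disjoint_left]; rintro ω h1 h0
      simp only [Set.mem_setOf_eq] at h1 h0
      rw [h1] at h0; norm_num at h0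
    have hunion : ℙ ({ω | X i ω = 1} ∪ {ω | X i ω = 0}) = 1 := by
      rw [measure_union hdisj hB, hone i, hzero i]
      rw [add_tsub_cancel_of_le (by
        simpa using ENNReal.ofReal_le_one.mpr hp1)]
    have hae : ∀ᵐ ω ∂(ℙ : Measure Ω), X i ω = 1 ∨ X i ω = 0 := by
      have hcompl : ℙ ({ω | X i ω = 1} ∪ {ω | X i ω = 0})ᶜ = 0 := by
        rw [measure_compl (hA.union hB) (measure_ne_top _ _), hunion, measure_univ,
          tsub_self]
      filter_upwards [measure_eq_zero_iff_ae_notMem.mp hcompl] with ω hω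
      simpa [Set.mem_union, Set.mem_setOf_eq, not_or, -not_and, Classical.not_not] using
        not_not.mp (fun h => hω (by simpa [Set.mem_union] using h))
    have haeq : (fun ω => Real.exp (t * X i ω)) =ᵐ[ℙ]
        (Set.indicator {ω | X i ω = 1} (fun _ => Real.exp t)
          + Set.indicator {ω | X i ω = 0} (fun _ => (1:ℝ))) := by
      filter_upwards [hae] with ω hω
      rcases hω with h | h <;>
        simp [Set.indicator_apply, Set.mem_setOf_eq, h, Pi.add_apply]
    have hintA : Integrable (Set.indicator {ω | X i ω = 1} (fun _ => Real.exp t)) ℙ :=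
      (integrable_const _).indicator hA
    have hintB : Integrable (Set.indicator {ω | X i ω = 0} (fun _ => (1:ℝ))) ℙ :=
      (integrable_const _).indicator hB
    refine ⟨(hintA.add hintB).congr haeq.symm, ?_⟩
    rw [mgf, integral_congr_ae haeq]
    simp only [Pi.add_apply]
    rw [integral_add hintA hintB,
      integral_indicator_const _ hA, integral_indicator_const _ hB, measureReal_def, measureReal_def, hone i, hzero i]
    have h1 : (ENNReal.ofReal p).toReal = p := ENNReal.toReal_ofReal hp0
    have h2 : (1 - ENNReal.ofReal p).toReal = 1 - p := by
      rw [ENNReal.toReal_sub_of_le (ENNReal.ofReal_le_one.mpr hp1) (by norm_num)]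
      simp [h1]
    rw [h1, h2]; simp only [smul_eq_mul]; ring
  -- Chernoff bound
  have hSint : Integrable (fun ω => Real.exp (t * (∑ i, X i) ω)) ℙ :=
    hindep.integrable_exp_mul_sum hXmeas (fun i _ => (hmgf i).1)
  have hchern := measure_ge_le_exp_mul_mgf (μ := ℙ) (X := ∑ i, X i) (k:ℝ) ht0 hSint
  rw [hindep.mgf_sum hXmeas] at hchern
  simp only [(hmgf _).2, Finset.prod_const, Finset.card_univ, Fintype.card_fin] at hchern
  have hnp : ((m / 50 : ℕ) : ℝ) * p = k / 25 := by
    have hn : ((m / 50 : ℕ) : ℝ) = (m : ℝ) / 50 := by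
      rw [Nat.cast_div h50 (by norm_num)]; norm_num
    rw [hn, hp_def]
    field_simp
    ring
  -- bound the real quantity
  have hbnd : Real.exp (-t * k) * (p * Real.exp t + (1 - p)) ^ (m / 50) ≤
      (Real.exp 24 / 25 ^ 25) ^ ((k : ℝ) / 25) := by
    have h1 : (p * Real.exp t + (1 - p)) ^ (m / 50) ≤ Real.exp (p * (Real.exp t - 1)) ^ (m / 50) := by
      apply pow_le_pow_left₀
      · nlinarith [Real.exp_pos t]
      · have := Real.add_one_le_exp (p * (Real.exp t - 1))
        nlinarith
    have h2 : Real.exp (p * (Real.exp t - 1)) ^ (m / 50) = Real.exp (((m / 50 : ℕ) : ℝ) * p * (Real.exp t - 1)) := by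
      rw [← Real.exp_nat_mul]; ring_nf
    have h3 : Real.exp (-t * k) * Real.exp (((m / 50 : ℕ) : ℝ) * p * (Real.exp t - 1)) =
        (Real.exp 24 / 25 ^ 25) ^ ((k : ℝ) / 25) := by
      rw [← Real.exp_add, hnp, het,
        Real.rpow_def_of_pos (by positivity),
        Real.log_div (Real.exp_ne_zero _) (by norm_num),
        Real.log_exp, Real.log_pow, ht_def]
      congr 1
      push_cast
      ring
    calc Real.exp (-t * k) * (p * Real.exp t + (1 - p)) ^ (m / 50)
        ≤ Real.exp (-t * k) * Real.exp (p * (Real.exp t - 1)) ^ (m / 50) := by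
          have := Real.exp_pos (-t * k); nlinarith
      _ = (Real.exp 24 / 25 ^ 25) ^ ((k : ℝ) / 25) := by rw [h2, h3]
  have hsum_eq : {ω | (k : ℝ) ≤ ∑ i, X i ω} = {ω | (k : ℝ) ≤ (∑ i, X i) ω} := by
    simp [Finset.sum_apply]
  constructor
  · rw [hsum_eq]
    calc ℙ {ω | (k : ℝ) ≤ (∑ i, X i) ω}
        = ENNReal.ofReal (ℙ {ω | (k : ℝ) ≤ (∑ i, X i) ω}).toReal := by
          rw [ENNReal.ofReal_toReal (measure_ne_top _ _)]
      _ ≤ ENNReal.ofReal ((Real.exp 24 / 25 ^ 25) ^ ((k : ℝ) / 25)) :=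
          ENNReal.ofReal_le_ofReal (hchern.trans hbnd)
  · -- numerical bound
    have hbpos : (0:ℝ) < Real.exp 24 / 25 ^ 25 := by positivity
    have hb : Real.exp 24 ≤ 2.75 ^ (25:ℕ) := by
      have h1 : Real.exp 24 = Real.exp 1 ^ (24:ℕ) := by
        rw [← Real.exp_nat_mul]; norm_num
      have h2 : Real.exp 1 ^ (24:ℕ) ≤ 2.7182818286 ^ (24:ℕ) :=
        pow_le_pow_left₀ (Real.exp_pos 1).le Real.exp_one_lt_d9.le 24
      have h3 : (2.7182818286:ℝ) ^ (24:ℕ) ≤ 2.75 ^ (25:ℕ) := by norm_num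
      linarith
    have hbase : Real.exp 24 / 25 ^ 25 ≤ 0.11 ^ (25:ℕ) := by
      rw [div_le_iff₀ (by positivity)]
      calc Real.exp 24 ≤ 2.75 ^ (25:ℕ) := hb
        _ = 0.11 ^ (25:ℕ) * 25 ^ 25 := by rw [← mul_pow]; norm_num
    have hble1 : Real.exp 24 / 25 ^ 25 ≤ 1 := hbase.trans (by norm_num)
    have hk1 : (1:ℝ)/25 ≤ (k:ℝ)/25 := by
      have : (1:ℝ) ≤ k := by exact_mod_cast hk
      linarith
    have h1 : (Real.exp 24 / 25 ^ 25) ^ ((k:ℝ)/25) ≤ (Real.exp 24 / 25 ^ 25) ^ ((1:ℝ)/25) :=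
      Real.rpow_le_rpow_of_exponent_ge hbpos hble1 hk1
    have h2 : (Real.exp 24 / 25 ^ 25) ^ ((1:ℝ)/25) ≤ 0.11 := by
      have h3 := Real.rpow_le_rpow hbpos.le hbase (by norm_num : (0:ℝ) ≤ 1/25)
      rw [← Real.rpow_natCast (0.11:ℝ) 25, ← Real.rpow_mul (by norm_num)] at h3
      have he : ((25:ℕ):ℝ) * (1/25) = 1 := by norm_num
      rw [he, Real.rpow_one] at h3
      exact h3
    linarith
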